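/- If n balls are thrown independently and uniformly at random into n bins, then the expected total value of Σ_i (X_i · ⌈log₂ X_i⌉), where X_i is the number of balls in bin i and terms with X_i ≤ 1 contribute 0, is at most C·n for an absolute constant C (e.g., C = 1). -/

import Mathlib

open Finset

lemma clog2_le_pred (k : ℕ) : Nat.clog 2 k ≤ k - 1 := by
  rcases Nat.eq_zero_or_pos k with hk | hk
  · simp [hk]
  · rw [Nat.clog_le_iff_le_pow one_lt_two]
    have h := Nat.lt_two_pow_self (n := k - 1)
    calc k = (k - 1) + 1 := by omega
    _ ≤ 2 ^ (k - 1) := h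

lemma count_eq {n : ℕ} (a b : Fin n) (hab : a ≠ b) :
    (Finset.univ.filter (fun ω : Fin n → Fin n => ω a = ω b)).card = n ^ (n - 1) := by
  classical
  rw [← Fintype.card_subtype]
  have e : {ω : Fin n → Fin n // ω a = ω b} ≃ ({i : Fin n // i ≠ b} → Fin n) :=
    { toFun := fun ω i => ω.1 i.1
      invFun := fun g => ⟨fun i => if h : i = b then g ⟨a, hab⟩ else g ⟨i, h⟩, by
        simp [hab]⟩
      left_inv := fun ω => by
        ext i
        by_cases h : i = b
        · simp [h, ← ω.2]
        · simp [h]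
      right_inv := fun g => by
        ext i
        simp [i.2] }
  rw [Fintype.card_congr e, Fintype.card_fun]
  congr 1
  · exact Fintype.card_fin n
  · rw [Fintype.card_subtype_compl]
    simp

lemma perOmega {n : ℕ} (ω : Fin n → Fin n) :
    ∑ i : Fin n, (Finset.univ.filter (fun j => ω j = i)).card *
        ((Finset.univ.filter (fun j => ω j = i)).card - 1) =
      (Finset.univ.offDiag.filter (fun p : (Fin n) × (Fin n) => ω p.1 = ω p.2)).card := by
  classical
  have hdisj : ∀ x ∈ (Finset.univ : Finset (Fin n)), ∀ y ∈ (Finset.univ : Finset (Fin n)),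
      x ≠ y → Disjoint ((Finset.univ.filter (fun j => ω j = x)).offDiag)
        ((Finset.univ.filter (fun j => ω j = y)).offDiag) := by
    intro x _ y _ hxy
    rw [Finset.disjoint_left]
    intro p hp hq
    rw [Finset.mem_offDiag] at hp hq
    simp only [Finset.mem_filter] at hp hq
    exact hxy (hp.1.2 ▸ hq.1.2 ▸ rfl)
  have hunion : (Finset.univ.biUnion
      (fun i : Fin n => (Finset.univ.filter (fun j => ω j = i)).offDiag)) =
      Finset.univ.offDiag.filter (fun p : (Fin n) × (Fin n) => ω p.1 = ω p.2) := by
    ext p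
    rw [Finset.mem_biUnion, Finset.mem_filter, Finset.mem_offDiag]
    constructor
    · rintro ⟨i, -, hp⟩
      rw [Finset.mem_offDiag] at hp
      obtain ⟨h1, h2, h3⟩ := hp
      rw [Finset.mem_filter] at h1 h2
      exact ⟨⟨Finset.mem_univ _, Finset.mem_univ _, h3⟩, h1.2.trans h2.2.symm⟩
    · intro hp
      refine ⟨ω p.1, Finset.mem_univ _, ?_⟩
      rw [Finset.mem_offDiag]
      exact ⟨by simp, by simp [hp.2.symm], hp.1.2.2⟩
  calc ∑ i : Fin n, (Finset.univ.filter (fun j => ω j = i)).card *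
        ((Finset.univ.filter (fun j => ω j = i)).card - 1)
      = ∑ i : Fin n, ((Finset.univ.filter (fun j => ω j = i)).offDiag).card := by
        refine Finset.sum_congr rfl fun i _ => ?_
        rw [Finset.offDiag_card, Nat.mul_sub, Nat.mul_one]
    _ = (Finset.univ.biUnion
        (fun i : Fin n => (Finset.univ.filter (fun j => ω j = i)).offDiag)).card :=
        (Finset.card_biUnion hdisj).symm
    _ = _ := by rw [hunion]

lemma total_le {n : ℕ} (hn : 1 ≤ n) :
    ∑ ω : Fin n → Fin n, ∑ i : Fin n,
      (Finset.univ.filter (fun j => ω j = i)).card *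
        Nat.clog 2 ((Finset.univ.filter (fun j => ω j = i)).card) ≤ n * n ^ n := by
  classical
  calc ∑ ω : Fin n → Fin n, ∑ i : Fin n,
      (Finset.univ.filter (fun j => ω j = i)).card *
        Nat.clog 2 ((Finset.univ.filter (fun j => ω j = i)).card)
      ≤ ∑ ω : Fin n → Fin n, ∑ i : Fin n,
        (Finset.univ.filter (fun j => ω j = i)).card *
          ((Finset.univ.filter (fun j => ω j = i)).card - 1) :=
      Finset.sum_le_sum fun ω _ => Finset.sum_le_sum fun i _ =>
        Nat.mul_le_mul_left _ (clog2_le_pred _)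
    _ = ∑ ω : Fin n → Fin n,
        (Finset.univ.offDiag.filter (fun p : (Fin n) × (Fin n) => ω p.1 = ω p.2)).card :=
      Finset.sum_congr rfl fun ω _ => perOmega ω
    _ = ∑ ω : Fin n → Fin n, ∑ p ∈ Finset.univ.offDiag,
        (if ω p.1 = ω p.2 then 1 else 0) :=
      Finset.sum_congr rfl fun ω _ => Finset.card_filter _ _
    _ = ∑ p ∈ (Finset.univ : Finset (Fin n)).offDiag, ∑ ω : Fin n → Fin n,
        (if ω p.1 = ω p.2 then 1 else 0) := Finset.sum_comm
    _ = ∑ p ∈ (Finset.univ : Finset (Fin n)).offDiag, n ^ (n - 1) := by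
      refine Finset.sum_congr rfl fun p hp => ?_
      rw [← Finset.card_filter]
      exact count_eq p.1 p.2 (Finset.mem_offDiag.mp hp).2.2
    _ = (n * n - n) * n ^ (n - 1) := by
      rw [Finset.sum_const, smul_eq_mul, Finset.offDiag_card]
      simp
    _ ≤ (n * n) * n ^ (n - 1) :=
      Nat.mul_le_mul_right _ (Nat.sub_le _ _)
    _ = n * n ^ n := by
      have : n ^ n = n ^ (n - 1) * n := by
        rw [← pow_succ]
        congr 1
        omega
      rw [this]
      ring

theorem stmt1 (n : ℕ) (hn : 1 ≤ n) :
    (1 / (n : ℝ) ^ n) * ∑ ω : Fin n → Fin n, ∑ i : Fin n,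
      (((Finset.univ.filter (fun j => ω j = i)).card *
        Nat.clog 2 ((Finset.univ.filter (fun j => ω j = i)).card) : ℕ) : ℝ)
      ≤ 1 * n := by
  have hn' : (0 : ℝ) < (n : ℝ) := by exact_mod_cast hn
  have hpow : (0 : ℝ) < (n : ℝ) ^ n := pow_pos hn' n
  have hcast : (∑ ω : Fin n → Fin n, ∑ i : Fin n,
      (((Finset.univ.filter (fun j => ω j = i)).card *
        Nat.clog 2 ((Finset.univ.filter (fun j => ω j = i)).card) : ℕ) : ℝ)) =
      ((∑ ω : Fin n → Fin n, ∑ i : Fin n,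
      (Finset.univ.filter (fun j => ω j = i)).card *
        Nat.clog 2 ((Finset.univ.filter (fun j => ω j = i)).card) : ℕ) : ℝ) := by
    push_cast
    rfl
  rw [hcast, one_mul, div_mul_eq_mul_div, one_mul, div_le_iff₀ hpow]
  have := total_le hn
  calc ((∑ ω : Fin n → Fin n, ∑ i : Fin n,
      (Finset.univ.filter (fun j => ω j = i)).card *
        Nat.clog 2 ((Finset.univ.filter (fun j => ω j = i)).card) : ℕ) : ℝ)
      ≤ ((n * n ^ n : ℕ) : ℝ) := by exact_mod_cast this
    _ = (n : ℝ) * (n : ℝ) ^ n := by push_cast; ring
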